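/- For γ > 0 and t₄, t₆, m₂ ∈ ℝ, define the hexic spectral density ρ(x) = (1/2π)( t₆x⁴ + (t₄ + 2t₆γ² + 10t₆m₂)x² + (1/γ² − t₄γ² − 4t₆γ⁴ − 10t₆γ²m₂) )√(4γ² − x²) for x ∈ [−2γ, 2γ] (and ρ = 0 outside). Then ∫_{−2γ}^{2γ} ρ(x) dx = 1 for all values of t₄, t₆, m₂ and all γ > 0. -/

import Mathlib

open Real intervalIntegral

/-- Unit-interval moment integral: `∫_{-1}^1 (a x⁴ + b x² + c) √(1-x²) dx`. -/
lemma unit_moment_integral (a b c : ℝ) :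
    ∫ x in (-1 : ℝ)..1, (a * x ^ 4 + b * x ^ 2 + c) * Real.sqrt (1 - x ^ 2)
      = (a / 16 + b / 8 + c / 2) * Real.pi := by
  have hK : ∀ x : ℝ, (a * x ^ 4 + b * x ^ 2 + c) * Real.sqrt (1 - x ^ 2)
      = (fun x => (a * x ^ 4 + b * x ^ 2 + c) * Real.sqrt (1 - x ^ 2)) x := fun _ => rfl
  set K : ℝ := a / 16 + b / 8 + c / 2 with hKdef
  set P : ℝ → ℝ := fun x => a / 6 * x ^ 5 + (b / 4 - a / 24) * x ^ 3 + (c / 2 - b / 8 - a / 16) * x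
    with hP
  set F : ℝ → ℝ := fun x => K * Real.arcsin x + Real.sqrt (1 - x ^ 2) * P x with hF
  have hcont : ContinuousOn F (Set.Icc (-1 : ℝ) 1) := by
    apply Continuous.continuousOn
    exact (continuous_const.mul Real.continuous_arcsin).add
      ((Real.continuous_sqrt.comp (by fun_prop)).mul (by fun_prop))
  have hderiv : ∀ x ∈ Set.Ioo (-1 : ℝ) 1,
      HasDerivAt F ((a * x ^ 4 + b * x ^ 2 + c) * Real.sqrt (1 - x ^ 2)) x := by
    intro x hx
    have hx1 : x ≠ -1 := by intro h; simp [h] at hx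
    have hx2 : x ≠ 1 := by intro h; simp [h] at hx
    have hs : (0 : ℝ) < 1 - x ^ 2 := by nlinarith [hx.1, hx.2]
    have hsqrt : (0 : ℝ) < Real.sqrt (1 - x ^ 2) := Real.sqrt_pos.mpr hs
    have hsq : Real.sqrt (1 - x ^ 2) ^ 2 = 1 - x ^ 2 := Real.sq_sqrt hs.le
    have h1 : HasDerivAt Real.arcsin (1 / Real.sqrt (1 - x ^ 2)) x :=
      Real.hasDerivAt_arcsin hx1 hx2
    have h2 : HasDerivAt (fun x : ℝ => 1 - x ^ 2) (-(2 * x)) x := by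
      simpa using ((hasDerivAt_pow 2 x).const_sub 1)
    have h3 : HasDerivAt (fun x : ℝ => Real.sqrt (1 - x ^ 2))
        (-(2 * x) / (2 * Real.sqrt (1 - x ^ 2))) x := h2.sqrt hs.ne'
    have h4 : HasDerivAt P
        (a / 6 * (5 * x ^ 4) + (b / 4 - a / 24) * (3 * x ^ 2) + (c / 2 - b / 8 - a / 16)) x := by
      rw [hP]
      have := (((hasDerivAt_pow 5 x).const_mul (a / 6)).add
        ((hasDerivAt_pow 3 x).const_mul (b / 4 - a / 24))).add
        ((hasDerivAt_id x).const_mul (c / 2 - b / 8 - a / 16))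
      convert this using 1
      · rfl
      · rfl
      · rfl
      · push_cast; ring
    have h5 := (h1.const_mul K).add (h3.mul h4)
    convert h5 using 1
    · rfl
    · rfl
    · rfl
    have h1s : 1 / Real.sqrt (1 - x ^ 2) = Real.sqrt (1 - x ^ 2) / (1 - x ^ 2) := by
      rw [div_eq_div_iff hsqrt.ne' hs.ne']
      linear_combination -hsq
    have h2s : -(2 * x) / (2 * Real.sqrt (1 - x ^ 2))
        = -x * Real.sqrt (1 - x ^ 2) / (1 - x ^ 2) := by
      rw [div_eq_div_iff (by positivity) hs.ne']
      linear_combination (2 * x) * hsq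
    rw [h1s, h2s, hKdef, hP]
    field_simp
    ring
  have hint : IntervalIntegrable
      (fun x => (a * x ^ 4 + b * x ^ 2 + c) * Real.sqrt (1 - x ^ 2)) MeasureTheory.volume
      (-1 : ℝ) 1 := by
    apply Continuous.intervalIntegrable
    fun_prop
  have := intervalIntegral.integral_eq_sub_of_hasDerivAt_of_le (by norm_num) hcont hderiv hint
  rw [this]
  simp [hF, hP, Real.arcsin_one, Real.arcsin_neg_one]
  ring

/-- Normalization of the hexic spectral density: for all `γ > 0`, `t₄`, `t₆`, `m₂`,
`∫_{-2γ}^{2γ} ρ(x) dx = 1`. -/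
theorem hexic_density_normalized (γ t₄ t₆ m₂ : ℝ) (hγ : 0 < γ) :
    ∫ x in (-(2 * γ))..(2 * γ),
        (1 / (2 * Real.pi)) *
          (t₆ * x ^ 4 + (t₄ + 2 * t₆ * γ ^ 2 + 10 * t₆ * m₂) * x ^ 2 +
            (1 / γ ^ 2 - t₄ * γ ^ 2 - 4 * t₆ * γ ^ 4 - 10 * t₆ * γ ^ 2 * m₂)) *
          Real.sqrt (4 * γ ^ 2 - x ^ 2) = 1 := by
  have h2γ : (0 : ℝ) < 2 * γ := by linarith
  set f : ℝ → ℝ := fun x =>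
      (1 / (2 * Real.pi)) *
        (t₆ * x ^ 4 + (t₄ + 2 * t₆ * γ ^ 2 + 10 * t₆ * m₂) * x ^ 2 +
          (1 / γ ^ 2 - t₄ * γ ^ 2 - 4 * t₆ * γ ^ 4 - 10 * t₆ * γ ^ 2 * m₂)) *
        Real.sqrt (4 * γ ^ 2 - x ^ 2) with hf
  have hcv : (∫ x in (-1 : ℝ)..1, f (2 * γ * x))
      = (2 * γ)⁻¹ • ∫ x in (2 * γ * (-1))..(2 * γ * 1), f x :=
    intervalIntegral.integral_comp_mul_left f h2γ.ne'
  have hbnd : (2 * γ * (-1) : ℝ) = -(2 * γ) ∧ (2 * γ * 1 : ℝ) = 2 * γ := by constructor <;> ring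
  rw [hbnd.1, hbnd.2] at hcv
  -- rewrite the scaled integrand
  have hsqrt : ∀ x : ℝ, Real.sqrt (4 * γ ^ 2 - (2 * γ * x) ^ 2)
      = (2 * γ) * Real.sqrt (1 - x ^ 2) := by
    intro x
    have : 4 * γ ^ 2 - (2 * γ * x) ^ 2 = (2 * γ) ^ 2 * (1 - x ^ 2) := by ring
    rw [this, Real.sqrt_mul (sq_nonneg _), Real.sqrt_sq h2γ.le]
  have hre : (∫ x in (-1 : ℝ)..1, f (2 * γ * x))
      = ∫ x in (-1 : ℝ)..1,
          ((2 * γ) / (2 * Real.pi) * (t₆ * (2 * γ) ^ 4) * x ^ 4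
            + (2 * γ) / (2 * Real.pi) * ((t₄ + 2 * t₆ * γ ^ 2 + 10 * t₆ * m₂) * (2 * γ) ^ 2) * x ^ 2
            + (2 * γ) / (2 * Real.pi) *
              (1 / γ ^ 2 - t₄ * γ ^ 2 - 4 * t₆ * γ ^ 4 - 10 * t₆ * γ ^ 2 * m₂))
          * Real.sqrt (1 - x ^ 2) := by
    apply intervalIntegral.integral_congr
    intro x _
    rw [hf]
    simp only
    rw [hsqrt x]
    ring
  rw [hre, unit_moment_integral] at hcv
  have hπ : Real.pi ≠ 0 := Real.pi_ne_zero
  have hγ' : γ ≠ 0 := hγ.ne'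
  have hI : (∫ x in (-(2 * γ))..(2 * γ), f x)
      = 2 * γ * ((2 * γ)⁻¹ • ∫ x in (-(2 * γ))..(2 * γ), f x) := by
    rw [smul_eq_mul, ← mul_assoc, mul_inv_cancel₀ h2γ.ne', one_mul]
  show (∫ x in (-(2 * γ))..(2 * γ), f x) = 1
  rw [hI, ← hcv]
  field_simp
  ring
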